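/- The quadratic map Q : ℝ² → ℝ², Q(x₁,x₂) = (x₁² − x₂², 2x₁x₂), has no nontrivial zeros (in particular no regular zeros), but Q is an open map. -/

import Mathlib

lemma complex_sq_open : IsOpenMap (fun z : ℂ => z ^ 2) := by
  intro U hU
  have h : AnalyticOnNhd ℂ (fun z : ℂ => z ^ 2) Set.univ := fun z _ => by
    exact (analyticAt_id (𝕜 := ℂ)).pow 2
  rcases h.is_constant_or_isOpen isPreconnected_univ with hc | ho
  · rcases hc with ⟨c, hc⟩
    have h0 := hc 0 trivial
    have h1 := hc 1 trivial
    simp at h0 h1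
    exact absurd (h1.trans h0.symm) one_ne_zero
  · have := ho U (Set.subset_univ U) hU
    simpa using this

/-- the quadratic map `Q(x₁,x₂) = (x₁² − x₂², 2x₁x₂)` has no
nontrivial zeros, but it is an open map. -/
theorem quadratic_no_zero_but_open :
    (∀ v : ℝ × ℝ, (v.1 ^ 2 - v.2 ^ 2, 2 * v.1 * v.2) = (0, 0) → v = 0) ∧
    IsOpenMap (fun v : ℝ × ℝ => (v.1 ^ 2 - v.2 ^ 2, 2 * v.1 * v.2)) := by
  constructor
  · rintro ⟨x, y⟩ h
    simp only [Prod.mk.injEq] at h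
    obtain ⟨h1, h2⟩ := h
    have hxy : x * y = 0 := by linarith
    rcases mul_eq_zero.mp hxy with h | h
    · have : y = 0 := by nlinarith
      simp [Prod.ext_iff, h, this]
    · have : x = 0 := by nlinarith
      simp [Prod.ext_iff, h, this]
  · have key : (fun v : ℝ × ℝ => (v.1 ^ 2 - v.2 ^ 2, 2 * v.1 * v.2)) =
        Complex.equivRealProdCLM.toHomeomorph ∘ (fun z : ℂ => z ^ 2) ∘
          Complex.equivRealProdCLM.toHomeomorph.symm := by
      funext v
      simp only [Function.comp, ContinuousLinearEquiv.coe_toHomeomorph,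
        ContinuousLinearEquiv.coe_symm_toHomeomorph, Complex.equivRealProdCLM_symm_apply]
      rw [show Complex.equivRealProdCLM ((↑v.1 + ↑v.2 * Complex.I) ^ 2) =
        (((↑v.1 + ↑v.2 * Complex.I : ℂ) ^ 2).re, ((↑v.1 + ↑v.2 * Complex.I : ℂ) ^ 2).im) from rfl]
      simp [pow_two, Complex.mul_re, Complex.mul_im]
      ring
    rw [key]
    exact (Complex.equivRealProdCLM.toHomeomorph.isOpenMap.comp complex_sq_open).comp
      Complex.equivRealProdCLM.toHomeomorph.symm.isOpenMap
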